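/- Let a be a minimal automorphism of a spherically homogeneous rooted tree T. Then the centralizer of a in Aut(T) equals the closure of the cyclic group generated by a: any σ ∈ Aut(T) commuting with a lies in the closure of ⟨a⟩. -/

import Mathlib

/-- The boundary of the spherically homogeneous rooted tree with spherical
index `m`: infinite paths are sequences `x` with `x n ∈ {0, …, m n - 1}`. -/
abbrev Bd (m : ℕ → ℕ) : Type := ∀ n : ℕ, Fin (m n)

/-- A permutation of the boundary is a tree automorphism iff it preserves the
relation "agree on the first `N` coordinates" (i.e. it permutes each vertex
level preserving the tree structure). -/
def IsTreeAut {m : ℕ → ℕ} (e : Equiv.Perm (Bd m)) : Prop :=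
  ∀ (N : ℕ) (x y : Bd m), (∀ n < N, x n = y n) ↔ (∀ n < N, e x n = e y n)

/-- The automorphism group of the spherically homogeneous rooted tree with
spherical index `m`, realized as a subgroup of the permutations of the
boundary. -/
def treeAutGroup (m : ℕ → ℕ) : Subgroup (Equiv.Perm (Bd m)) where
  carrier := {e | IsTreeAut e}
  one_mem' := fun _ _ _ => Iff.rfl
  mul_mem' := by
    intro a b ha hb N x y
    exact (hb N x y).trans (ha N (b x) (b y))
  inv_mem' := by
    intro a ha N x y
    have h := ha N (a⁻¹ x) (a⁻¹ y)
    simpa [Equiv.apply_symm_apply] using h.symm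

/-- The orbit of `x` under the cyclic group generated by `a`. -/
def orbitZ {m : ℕ → ℕ} (a : Equiv.Perm (Bd m)) (x : Bd m) : Set (Bd m) :=
  {y | ∃ k : ℤ, (a ^ k) x = y}

/-- `a` acts transitively on every vertex level `V n` (vertices at level `n`
are identified with length-`n` prefixes of boundary points). -/
def LevelTransitive {m : ℕ → ℕ} (a : Equiv.Perm (Bd m)) : Prop :=
  ∀ (n : ℕ) (x y : Bd m), ∃ k : ℤ, ∀ i < n, ((a ^ k) x) i = y i

/-- `f` belongs to the closure of the set `Γ` of tree automorphisms in the
profinite (= uniform) topology on `Aut(T)`: for every level `n` there is an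
element of `Γ` agreeing with `f` up to level `n` everywhere. -/
def InClosure {m : ℕ → ℕ} (Γ : Set (Equiv.Perm (Bd m))) (f : Bd m → Bd m) : Prop :=
  ∀ n : ℕ, ∃ g ∈ Γ, ∀ x : Bd m, ∀ i < n, f x i = g x i

/-- Let `a` be a minimal automorphism of a spherically homogeneous rooted
tree. Then the centralizer of `a` in `Aut(T)` equals the closure of the
cyclic group `⟨a⟩`: every `σ ∈ Aut(T)` commuting with `a` lies in the
closure of `⟨a⟩`, and conversely every element of the closure of `⟨a⟩`
commutes with `a`. -/
theorem settled_stmt9 {m : ℕ → ℕ} (hm : ∀ n, 2 ≤ m n)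
    (a : Equiv.Perm (Bd m)) (ha : a ∈ treeAutGroup m) (hamin : LevelTransitive a) :
    (∀ σ : Equiv.Perm (Bd m), σ ∈ treeAutGroup m → σ * a = a * σ →
      InClosure ((Subgroup.zpowers a : Subgroup (Equiv.Perm (Bd m))) : Set (Equiv.Perm (Bd m))) ⇑σ) ∧
    (∀ f : Bd m → Bd m,
      InClosure ((Subgroup.zpowers a : Subgroup (Equiv.Perm (Bd m))) : Set (Equiv.Perm (Bd m))) f →
      f ∘ ⇑a = ⇑a ∘ f) := by
  -- `a^k` is a tree automorphism for every integer `k`.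
  have hapow : ∀ k : ℤ, IsTreeAut (a ^ k) := fun k =>
    (treeAutGroup m).zpow_mem ha k
  constructor
  · intro σ hσ hc n
    -- base point
    have x₀ : Bd m := fun n => ⟨0, lt_of_lt_of_le two_pos (hm n)⟩
    obtain ⟨k, hk⟩ := hamin n (σ x₀) x₀
    -- Use transitivity from x₀ to σ x₀ instead:
    obtain ⟨k, hk⟩ := hamin n x₀ (σ x₀)
    refine ⟨a ^ k, Subgroup.zpow_mem _ (Subgroup.mem_zpowers a) k, ?_⟩
    intro x i hi
    obtain ⟨j, hj⟩ := hamin n x₀ x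
    have hcom : Commute σ a := hc
    -- σ x agrees with σ ((a^j) x₀) on level n
    have h1 : ∀ i < n, σ x i = σ ((a ^ j) x₀) i := by
      intro i hi
      exact (hσ n x ((a ^ j) x₀)).mp (fun i hi => (hj i hi).symm) i hi
    -- σ ((a^j) x₀) = (a^j) (σ x₀)
    have h2 : σ ((a ^ j) x₀) = (a ^ j) (σ x₀) := by
      have := (hcom.zpow_right j).eq
      calc σ ((a ^ j) x₀) = (σ * a ^ j) x₀ := rfl
        _ = (a ^ j * σ) x₀ := by rw [this]
        _ = (a ^ j) (σ x₀) := rfl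
    -- (a^j) (σ x₀) agrees with (a^j) ((a^k) x₀) on level n
    have h3 : ∀ i < n, (a ^ j) (σ x₀) i = (a ^ j) ((a ^ k) x₀) i := by
      exact (hapow j n (σ x₀) ((a ^ k) x₀)).mp (fun i hi => (hk i hi).symm)
    -- (a^j)((a^k) x₀) = (a^k)((a^j) x₀)
    have h4 : (a ^ j) ((a ^ k) x₀) = (a ^ k) ((a ^ j) x₀) := by
      have : a ^ j * a ^ k = a ^ k * a ^ j := by
        rw [← zpow_add, ← zpow_add, add_comm]
      calc (a ^ j) ((a ^ k) x₀) = (a ^ j * a ^ k) x₀ := rfl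
        _ = (a ^ k * a ^ j) x₀ := by rw [this]
        _ = (a ^ k) ((a ^ j) x₀) := rfl
    -- (a^k)((a^j) x₀) agrees with (a^k) x on level n
    have h5 : ∀ i < n, (a ^ k) ((a ^ j) x₀) i = (a ^ k) x i := by
      exact (hapow k n ((a ^ j) x₀) x).mp hj
    calc σ x i = σ ((a ^ j) x₀) i := h1 i hi
      _ = (a ^ j) (σ x₀) i := by rw [h2]
      _ = (a ^ j) ((a ^ k) x₀) i := h3 i hi
      _ = (a ^ k) ((a ^ j) x₀) i := by rw [h4]
      _ = (a ^ k) x i := h5 i hi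
  · intro f hf
    funext x
    funext i
    obtain ⟨g, hg, hfg⟩ := hf (i + 1)
    obtain ⟨k, rfl⟩ := Subgroup.mem_zpowers_iff.mp hg
    have hgc : (a ^ k) (a x) = a ((a ^ k) x) := by
      have : a ^ k * a = a * a ^ k := (Commute.refl a).zpow_left k
      calc (a ^ k) (a x) = (a ^ k * a) x := rfl
        _ = (a * a ^ k) x := by rw [this]
        _ = a ((a ^ k) x) := rfl
    have h6 : ∀ j < i + 1, a ((a ^ k) x) j = a (f x) j :=
      (ha (i + 1) ((a ^ k) x) (f x)).mp (fun j hj => (hfg x j hj).symm)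
    calc (f ∘ ⇑a) x i = f (a x) i := rfl
      _ = (a ^ k) (a x) i := hfg (a x) i (Nat.lt_succ_self i)
      _ = a ((a ^ k) x) i := by rw [hgc]
      _ = a (f x) i := h6 i (Nat.lt_succ_self i)
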